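/- Let X = {0^∞} ∪ {(0j)^∞ : j ≥ 1} ∪ {(j0)^∞ : j ≥ 1} be the subshift over the alphabet ℕ determined by the allowed 3-blocks P = {(0,j,0) : j ∈ ℕ} ∪ {(j,0,j) : j ∈ ℕ}. Write A₀ := {0^∞}, B_j := {(0j)^∞}, C_j := {(j0)^∞} (j ≥ 1), U' := {(0j)^∞ : j ≥ 1}, V' := {(j0)^∞ : j ≥ 1}. Then the ℤ-module span_ℤ{χ_S : S ∈ U} equals the ℤ-span of {χ_{A₀}} ∪ {χ_{B_j} : j ≥ 1} ∪ {χ_{C_j} : j ≥ 1} ∪ {χ_{U'}, χ_{V'}}, and the ℤ-module span_ℤ{χ_S : S ∈ U_reg} equals the ℤ-span of {χ_{A₀}} ∪ {χ_{B_j} : j ≥ 1} ∪ {χ_{C_j} : j ≥ 1} ∪ {χ_{U'}}. -/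

import Mathlib

namespace SubshiftPaper

variable {A : Type*}

/-- The initial word of length `n` of a sequence. -/
def word (x : ℕ → A) (n : ℕ) : List A := List.ofFn (fun i : Fin n => x i)

/-- Concatenation of a finite word with an infinite sequence. -/
def cat (α : List A) (x : ℕ → A) : ℕ → A := fun n =>
  if h : n < α.length then α.get ⟨n, h⟩ else x (n - α.length)

/-- The shift map on infinite sequences. -/
def shiftSeq (x : ℕ → A) : ℕ → A := fun n => x (n + 1)

/-- `X` is a subshift: the set of sequences avoiding a set `F` of forbidden nonempty
finite words. -/
def IsSubshift (X : Set (ℕ → A)) : Prop :=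
  ∃ F : Set (List A), (∀ w ∈ F, w ≠ []) ∧
    X = {x : ℕ → A | ∀ n k : ℕ, word (fun i => x (n + i)) k ∉ F}

/-- The language of `X`: all finite initial blocks of elements of `X` (and their
subblocks appear by shifting; for subshifts initial blocks suffice). -/
def language (X : Set (ℕ → A)) : Set (List A) :=
  {α | ∃ x ∈ X, word x α.length = α}

open Classical in
/-- The product metric `d(x,y) = 2^{-min{n : xₙ ≠ yₙ}}`. -/
noncomputable def prodDist (x y : ℕ → A) : ℝ :=
  if h : x = y then 0 else (2 : ℝ)⁻¹ ^ Nat.find (Function.ne_iff.mp h)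

/-- The cylinder set `Z_α = {x ∈ X : x starts with α}`. -/
def cylinder (X : Set (ℕ → A)) (α : List A) : Set (ℕ → A) :=
  {x ∈ X | word x α.length = α}

/-- The set `C(α,β) = {βx : βx ∈ X and αx ∈ X}`. -/
def Cab (X : Set (ℕ → A)) (α β : List A) : Set (ℕ → A) :=
  {y | ∃ x : ℕ → A, y = cat β x ∧ cat β x ∈ X ∧ cat α x ∈ X}

/-- The follower set `F_α = {x ∈ X : αx ∈ X}`. -/
def follower (X : Set (ℕ → A)) (α : List A) : Set (ℕ → A) :=
  {x ∈ X | cat α x ∈ X}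

/-- The Boolean algebra `U` of subsets of `X` generated by the sets `C(α,β)`: the smallest
collection of subsets containing all `C(α,β)` and `X` and closed under finite unions, finite
intersections and complements in `X`. -/
def BA (X : Set (ℕ → A)) : Set (Set (ℕ → A)) :=
  ⋂₀ {C : Set (Set (ℕ → A)) | X ∈ C ∧
    (∀ α ∈ language X, ∀ β ∈ language X, Cab X α β ∈ C) ∧
    (∀ S ∈ C, ∀ T ∈ C, S ∪ T ∈ C) ∧
    (∀ S ∈ C, ∀ T ∈ C, S ∩ T ∈ C) ∧
    (∀ S ∈ C, X \ S ∈ C)}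

/-- The periodic sequence `γ^∞ = γγγ⋯`. -/
def per (γ : List A) (h : γ ≠ []) : ℕ → A :=
  fun n => γ.get ⟨n % γ.length, Nat.mod_lt n (List.length_pos_iff.mpr h)⟩

/-- A point is eventually periodic if it has the form `αγ^∞`. -/
def EventuallyPeriodic (x : ℕ → A) : Prop :=
  ∃ (α γ : List A) (h : γ ≠ []), x = cat α (per γ h)

/-- Condition (L): for every finite `P ⊆ L_X` and every nonempty `γ ∈ L_X` with
`γ^∞ ∈ F_P := ⋂_{α ∈ P} F_α`, the set `F_P` contains an element other than `γ^∞`. -/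
def ConditionL (X : Set (ℕ → A)) : Prop :=
  ∀ P : Finset (List A), ↑P ⊆ language X →
    ∀ γ ∈ language X, ∀ h : γ ≠ [],
      per γ h ∈ X ∩ ⋂ α ∈ P, follower X α →
        ∃ z ∈ X ∩ ⋂ α ∈ P, follower X α, z ≠ per γ h


/-- The set of letters `a` with `Z_a ∩ S ≠ ∅`. -/
def letterSet (X : Set (ℕ → A)) (S : Set (ℕ → A)) : Set A :=
  {a | ({x ∈ X | x 0 = a} ∩ S).Nonempty}

/-- The regular sets: `U_reg = {S ∈ U : {a : Z_a ∩ S ≠ ∅} is finite and nonempty}`. -/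
def Ureg (X : Set (ℕ → A)) : Set (Set (ℕ → A)) :=
  {S ∈ BA X | (letterSet X S).Finite ∧ (letterSet X S).Nonempty}

/-- The set `P` of allowed 3-blocks. -/
def allowedP : Set (ℕ × ℕ × ℕ) :=
  {p | ∃ j : ℕ, p = (0, j, 0)} ∪ {p | ∃ j : ℕ, p = (j, 0, j)}

/-- The 2-step subshift over `ℕ` determined by the allowed 3-blocks `P`. -/
def Xtriple : Set (ℕ → ℕ) :=
  {x | ∀ n : ℕ, (x n, x (n + 1), x (n + 2)) ∈ allowedP}

/-- The periodic sequence `(0j)^∞ = 0,j,0,j,…`. -/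
def alt0 (j : ℕ) : ℕ → ℕ := fun n => if n % 2 = 0 then 0 else j

/-- The periodic sequence `(j0)^∞ = j,0,j,0,…`. -/
def alt1 (j : ℕ) : ℕ → ℕ := fun n => if n % 2 = 0 then j else 0

open Classical in
/-- The indicator function `χ_S : X → ℤ` of a subset `S`. -/
noncomputable def ind (X : Set (ℕ → A)) (S : Set (ℕ → A)) : ↥X → ℤ :=
  fun x => if x.1 ∈ S then 1 else 0

-- ===================== auxiliary development =====================
open Classical

abbrev czero : ℕ → ℕ := fun _ => 0

/-- `Pat r j n = alt0 j (n + r)`, i.e. the `r`-fold shift of `(0j)^∞`. -/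
def Pat (r j : ℕ) : ℕ → ℕ := fun n => alt0 j (n + r)

lemma alt0_congr {j m n : ℕ} (h : m % 2 = n % 2) : alt0 j m = alt0 j n := by
  simp only [alt0, h]

lemma alt0_zero (j : ℕ) : alt0 j 0 = 0 := by simp [alt0]
lemma alt0_one (j : ℕ) : alt0 j 1 = j := by simp [alt0]
lemma alt1_zero (j : ℕ) : alt1 j 0 = j := by simp [alt1]

lemma alt1_eq_pat (j : ℕ) : alt1 j = Pat 1 j := by
  funext n
  simp only [alt1, Pat, alt0]
  rcases Nat.mod_two_eq_zero_or_one n with h | h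
  · rw [if_pos h, if_neg (by omega)]
  · rw [if_neg (by omega), if_pos (by omega)]

lemma alt1_apply (j n : ℕ) : alt1 j n = alt0 j (n + 1) := by
  rw [alt1_eq_pat]; rfl

/-- Local rule extracted from membership in `Xtriple`. -/
lemma rule {x : ℕ → ℕ} (hx : x ∈ Xtriple) (n : ℕ) :
    (x n = 0 ∧ x (n + 2) = 0) ∨ (x (n + 1) = 0 ∧ x (n + 2) = x n) := by
  rcases hx n with h | h
  · obtain ⟨j, hj⟩ := h
    simp only [Prod.mk.injEq] at hj
    exact Or.inl ⟨hj.1, hj.2.2⟩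
  · obtain ⟨j, hj⟩ := h
    simp only [Prod.mk.injEq] at hj
    exact Or.inr ⟨hj.2.1, hj.2.2.trans hj.1.symm⟩

lemma mem_X_of {x : ℕ → ℕ}
    (h : ∀ n, (x n = 0 ∧ x (n + 2) = 0) ∨ (x (n + 1) = 0 ∧ x (n + 2) = x n)) :
    x ∈ Xtriple := by
  intro n
  rcases h n with ⟨h1, h2⟩ | ⟨h1, h2⟩
  · exact Or.inl ⟨x (n + 1), by simp [Prod.mk.injEq, h1, h2]⟩
  · exact Or.inr ⟨x n, by simp [Prod.mk.injEq, h1, h2]⟩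

lemma czero_mem : czero ∈ Xtriple := mem_X_of (fun _ => Or.inl ⟨rfl, rfl⟩)

lemma pat_mem (q j : ℕ) : Pat q j ∈ Xtriple := by
  apply mem_X_of; intro n
  rcases Nat.mod_two_eq_zero_or_one (n + q) with h | h
  · left
    constructor
    · show alt0 j (n + q) = 0
      simp only [alt0]; rw [if_pos h]
    · show alt0 j (n + 2 + q) = 0
      simp only [alt0]; rw [if_pos (by omega)]
  · right
    constructor
    · show alt0 j (n + 1 + q) = 0
      simp only [alt0]; rw [if_pos (by omega)]
    · show alt0 j (n + 2 + q) = alt0 j (n + q)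
      exact alt0_congr (by omega)

lemma alt0_eq_pat (j : ℕ) : alt0 j = Pat 0 j := by
  funext n; show alt0 j n = alt0 j (n + 0); rw [Nat.add_zero]

lemma alt0_mem (j : ℕ) : alt0 j ∈ Xtriple := by rw [alt0_eq_pat]; exact pat_mem 0 j
lemma alt1_mem (j : ℕ) : alt1 j ∈ Xtriple := by rw [alt1_eq_pat]; exact pat_mem 1 j

lemma shift_mem {x : ℕ → ℕ} (hx : x ∈ Xtriple) : (fun n => x (n + 1)) ∈ Xtriple := by
  intro n
  have h := hx (n + 1)
  simpa [show n + 1 + 1 = n + 2 by omega, show n + 1 + 2 = n + 2 + 1 by omega] using h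

lemma zero_start {x : ℕ → ℕ} (hx : x ∈ Xtriple) (h0 : x 0 = 0) : x = alt0 (x 1) := by
  have key : ∀ k, x (2 * k) = 0 ∧ x (2 * k + 1) = x 1 := by
    intro k
    induction k with
    | zero => exact ⟨by simpa using h0, by norm_num⟩
    | succ k ih =>
      obtain ⟨h1, h2⟩ := ih
      have e2 : x (2 * k + 2) = 0 := by
        rcases rule hx (2 * k) with ⟨_, h⟩ | ⟨_, h⟩
        · exact h
        · rw [h, h1]
      have e3 : x (2 * k + 3) = x 1 := by
        rcases rule hx (2 * k + 1) with ⟨ha, hb⟩ | ⟨ha, hb⟩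
        · rw [show 2 * k + 1 + 2 = 2 * k + 3 by omega] at hb
          rw [hb, ← h2, ha]
        · rw [show 2 * k + 1 + 2 = 2 * k + 3 by omega] at hb
          rw [hb, h2]
      refine ⟨?_, ?_⟩
      · rw [show 2 * (k + 1) = 2 * k + 2 by omega]; exact e2
      · rw [show 2 * (k + 1) + 1 = 2 * k + 3 by omega]; exact e3
  funext n
  rcases Nat.mod_two_eq_zero_or_one n with h | h
  · rw [show n = 2 * (n / 2) by omega, (key (n / 2)).1]
    simp only [alt0]; rw [if_pos (by omega)]
  · rw [show n = 2 * (n / 2) + 1 by omega, (key (n / 2)).2]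
    simp only [alt0]; rw [if_neg (by omega)]

lemma mem_class {x : ℕ → ℕ} (hx : x ∈ Xtriple) :
    x = czero ∨ (∃ j, 1 ≤ j ∧ x = alt0 j) ∨ (∃ j, 1 ≤ j ∧ x = alt1 j) := by
  by_cases h0 : x 0 = 0
  · have hx0 := zero_start hx h0
    by_cases h1 : x 1 = 0
    · left
      funext n
      rw [congrFun hx0 n, h1]
      simp [alt0]
    · exact Or.inr (Or.inl ⟨x 1, by omega, hx0⟩)
  · refine Or.inr (Or.inr ⟨x 0, by omega, ?_⟩)
    have h1 : x 1 = 0 := by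
      rcases rule hx 0 with ⟨h, _⟩ | ⟨h, _⟩
      · exact absurd h h0
      · exact h
    have h2 : x 2 = x 0 := by
      rcases rule hx 0 with ⟨h, _⟩ | ⟨_, h⟩
      · exact absurd h h0
      · exact h
    have hsh := zero_start (shift_mem hx) (by simpa using h1)
    funext n
    rcases n with _ | m
    · rw [alt1_zero]
    · have hm := congrFun hsh m
      rw [hm, alt1_apply]
      have : x (1 + 1) = x 2 := by norm_num
      rw [this, h2]
      exact alt0_congr (by omega)

-- ============ cat lemmas ============

lemma cat_nil (x : ℕ → ℕ) : cat ([] : List ℕ) x = x := by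
  funext n; simp [cat]

lemma cat_lt {δ : List ℕ} {n : ℕ} (h : n < δ.length) (x : ℕ → ℕ) :
    cat δ x n = δ.get ⟨n, h⟩ := by
  simp only [cat]; rw [dif_pos h]

lemma cat_ge {δ : List ℕ} {n : ℕ} (h : δ.length ≤ n) (x : ℕ → ℕ) :
    cat δ x n = x (n - δ.length) := by
  simp only [cat]; rw [dif_neg (by omega)]

lemma cat_cons_zero (a : ℕ) (δ : List ℕ) (x : ℕ → ℕ) : cat (a :: δ) x 0 = a := by
  rw [cat_lt (by simp) x]; rfl

lemma cat_cons_succ (a : ℕ) (δ : List ℕ) (x : ℕ → ℕ) (n : ℕ) :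
    cat (a :: δ) x (n + 1) = cat δ x n := by
  by_cases h : n < δ.length
  · rw [cat_lt (by simpa using Nat.succ_lt_succ h) x, cat_lt h x]
    rfl
  · rw [cat_ge (by simp; omega) x, cat_ge (by omega) x]
    congr 1
    simp only [List.length_cons]
    omega

lemma cat_tail (δ : List ℕ) (x : ℕ → ℕ) : (fun n => cat δ x (n + δ.length)) = x := by
  funext n; rw [cat_ge (by omega) x]; congr 1; omega
-- ============ key characterization lemmas ============

lemma cat_pat_mem {j : ℕ} (hj : 1 ≤ j) (δ : List ℕ) (q : ℕ) :
    cat δ (Pat q j) ∈ Xtriple ↔ cat δ (Pat q j) = Pat (q + δ.length) j := by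
  constructor
  · induction δ generalizing q with
    | nil =>
      intro _
      rw [cat_nil]
      simp [Pat]
    | cons a δ' ih =>
      intro h
      have hz : cat δ' (Pat q j) ∈ Xtriple := by
        have h2 := shift_mem h
        have e : (fun n => cat (a :: δ') (Pat q j) (n + 1)) = cat δ' (Pat q j) := by
          funext n; exact cat_cons_succ a δ' (Pat q j) n
        rwa [e] at h2
      have hz' := ih q hz
      have hy1 : cat (a :: δ') (Pat q j) 1 = alt0 j (q + δ'.length) := by
        have := cat_cons_succ a δ' (Pat q j) 0
        rw [this, congrFun hz' 0]
        show alt0 j (0 + (q + δ'.length)) = _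
        rw [Nat.zero_add]
      have hy2 : cat (a :: δ') (Pat q j) 2 = alt0 j (q + δ'.length + 1) := by
        have := cat_cons_succ a δ' (Pat q j) 1
        rw [this, congrFun hz' 1]
        show alt0 j (1 + (q + δ'.length)) = _
        exact alt0_congr (by omega)
      funext n
      rcases n with _ | m
      · rw [cat_cons_zero]
        show a = alt0 j (0 + (q + (δ'.length + 1)))
        rcases Nat.mod_two_eq_zero_or_one (q + δ'.length) with hp | hp
        · -- y1 = 0, y2 = j : second rule branch must apply
          rcases rule h 0 with ⟨ha, hb⟩ | ⟨ha, hb⟩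
          · exfalso
            rw [hy2] at hb
            simp only [alt0] at hb
            rw [if_neg (by omega)] at hb
            omega
          · rw [cat_cons_zero] at hb
            rw [hy2] at hb
            rw [← hb]
            exact alt0_congr (by omega)
        · -- y1 = j ≠ 0, y2 = 0 : first rule branch must apply
          rcases rule h 0 with ⟨ha, hb⟩ | ⟨ha, hb⟩
          · rw [cat_cons_zero] at ha
            rw [ha]
            simp only [alt0]
            rw [if_pos (by omega)]
          · exfalso
            rw [hy1] at ha
            simp only [alt0] at ha
            rw [if_neg (by omega)] at ha
            omega
      · rw [cat_cons_succ, congrFun hz' m]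
        show alt0 j (m + (q + δ'.length)) = alt0 j (m + 1 + (q + (δ'.length + 1)))
        exact alt0_congr (by omega)
  · intro h; rw [h]; exact pat_mem _ _

lemma cat_pat_mem' {j : ℕ} (hj : 1 ≤ j) (δ : List ℕ) (q : ℕ) :
    cat δ (Pat q j) ∈ Xtriple ↔
      ∀ i (h : i < δ.length), δ.get ⟨i, h⟩ = alt0 j (i + (q + δ.length)) := by
  rw [cat_pat_mem hj]
  constructor
  · intro h i hi
    have h2 := congrFun h i
    rw [cat_lt hi] at h2
    exact h2
  · intro h
    funext n
    by_cases hn : n < δ.length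
    · rw [cat_lt hn, h n hn]; rfl
    · rw [cat_ge (by omega)]
      show alt0 j (n - δ.length + q) = alt0 j (n + (q + δ.length))
      exact alt0_congr (by omega)

lemma cat_zero_mem (δ : List ℕ) : cat δ czero ∈ Xtriple ↔ cat δ czero = czero := by
  constructor
  · intro h
    rcases mem_class h with h0 | ⟨j, hj, he⟩ | ⟨j, hj, he⟩
    · exact h0
    · exfalso
      have h1 : cat δ czero (2 * δ.length + 1) = 0 := by
        rw [cat_ge (by omega)]
      rw [he] at h1
      simp only [alt0] at h1
      rw [if_neg (by omega)] at h1
      omega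
    · exfalso
      have h1 : cat δ czero (2 * δ.length) = 0 := by
        rw [cat_ge (by omega)]
      rw [he] at h1
      simp only [alt1] at h1
      rw [if_pos (by omega)] at h1
      omega
  · intro h; rw [h]; exact czero_mem

-- ============ membership in Cab ============

lemma czero_mem_Cab (α β : List ℕ) :
    czero ∈ Cab Xtriple α β ↔ (cat β czero ∈ Xtriple ∧ cat α czero ∈ Xtriple) := by
  constructor
  · rintro ⟨x, hy, hβ, hα⟩
    have hx : x = czero := by
      funext n
      have h1 := congrFun (cat_tail β x) n
      rw [← hy] at h1
      exact h1.symm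
    rw [hx] at hβ hα
    exact ⟨hβ, hα⟩
  · rintro ⟨h1, h2⟩
    exact ⟨czero, ((cat_zero_mem β).mp h1).symm, h1, h2⟩

lemma alt0_mem_Cab {j : ℕ} (hj : 1 ≤ j) (α β : List ℕ) :
    alt0 j ∈ Cab Xtriple α β ↔
      (cat β (Pat β.length j) ∈ Xtriple ∧ cat α (Pat β.length j) ∈ Xtriple) := by
  constructor
  · rintro ⟨x, hy, hβ, hα⟩
    have hx : x = Pat β.length j := by
      funext n
      have h1 := congrFun (cat_tail β x) n
      rw [← hy] at h1
      exact h1.symm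
    rw [hx] at hβ hα
    exact ⟨hβ, hα⟩
  · rintro ⟨h1, h2⟩
    refine ⟨Pat β.length j, ?_, h1, h2⟩
    rw [(cat_pat_mem hj β _).mp h1]
    funext n
    show alt0 j n = alt0 j (n + (β.length + β.length))
    exact alt0_congr (by omega)

lemma alt1_mem_Cab {j : ℕ} (hj : 1 ≤ j) (α β : List ℕ) :
    alt1 j ∈ Cab Xtriple α β ↔
      (cat β (Pat (β.length + 1) j) ∈ Xtriple ∧ cat α (Pat (β.length + 1) j) ∈ Xtriple) := by
  constructor
  · rintro ⟨x, hy, hβ, hα⟩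
    have hx : x = Pat (β.length + 1) j := by
      funext n
      have h1 := congrFun (cat_tail β x) n
      rw [← hy] at h1
      rw [← h1, alt1_apply]
      show alt0 j (n + β.length + 1) = alt0 j (n + (β.length + 1))
      exact alt0_congr (by omega)
    rw [hx] at hβ hα
    exact ⟨hβ, hα⟩
  · rintro ⟨h1, h2⟩
    refine ⟨Pat (β.length + 1) j, ?_, h1, h2⟩
    rw [(cat_pat_mem hj β _).mp h1]
    funext n
    rw [alt1_apply]
    show alt0 j (n + 1) = alt0 j (n + (β.length + 1 + β.length))
    exact alt0_congr (by omega)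

lemma Cab_subset_X (α β : List ℕ) : Cab Xtriple α β ⊆ Xtriple := by
  rintro y ⟨x, hy, hβ, _⟩
  rw [hy]; exact hβ

-- ============ trichotomy ============

def TriP (P : ℕ → Prop) : Prop :=
  (∀ j, 1 ≤ j → P j) ∨ (∀ j, 1 ≤ j → ¬P j) ∨ ∃ v, 1 ≤ v ∧ ∀ j, 1 ≤ j → (P j ↔ j = v)

lemma triP_congr {P Q : ℕ → Prop} (h : ∀ j, 1 ≤ j → (P j ↔ Q j)) (hP : TriP P) : TriP Q := by
  rcases hP with h1 | h1 | ⟨v, hv, h1⟩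
  · exact Or.inl fun j hj => (h j hj).mp (h1 j hj)
  · exact Or.inr (Or.inl fun j hj hQ => h1 j hj ((h j hj).mpr hQ))
  · exact Or.inr (Or.inr ⟨v, hv, fun j hj => (h j hj).symm.trans (h1 j hj)⟩)

lemma triP_and {P Q : ℕ → Prop} (hP : TriP P) (hQ : TriP Q) : TriP (fun j => P j ∧ Q j) := by
  rcases hP with h1 | h1 | ⟨v, hv, h1⟩
  · rcases hQ with h2 | h2 | ⟨w, hw, h2⟩
    · exact Or.inl fun j hj => ⟨h1 j hj, h2 j hj⟩
    · exact Or.inr (Or.inl fun j hj hPQ => h2 j hj hPQ.2)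
    · exact Or.inr (Or.inr ⟨w, hw, fun j hj =>
        ⟨fun hPQ => (h2 j hj).mp hPQ.2, fun he => ⟨h1 j hj, (h2 j hj).mpr he⟩⟩⟩)
  · exact Or.inr (Or.inl fun j hj hPQ => h1 j hj hPQ.1)
  · rcases hQ with h2 | h2 | ⟨w, hw, h2⟩
    · exact Or.inr (Or.inr ⟨v, hv, fun j hj =>
        ⟨fun hPQ => (h1 j hj).mp hPQ.1, fun he => ⟨(h1 j hj).mpr he, h2 j hj⟩⟩⟩)
    · exact Or.inr (Or.inl fun j hj hPQ => h2 j hj hPQ.2)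
    · by_cases hvw : v = w
      · subst hvw
        exact Or.inr (Or.inr ⟨v, hv, fun j hj =>
          ⟨fun hPQ => (h1 j hj).mp hPQ.1, fun he => ⟨(h1 j hj).mpr he, (h2 j hj).mpr he⟩⟩⟩)
      · refine Or.inr (Or.inl fun j hj hPQ => ?_)
        have := (h1 j hj).mp hPQ.1
        have := (h2 j hj).mp hPQ.2
        omega

lemma triP_pref (δ : List ℕ) (c : ℕ) :
    TriP (fun j => ∀ i (h : i < δ.length), δ.get ⟨i, h⟩ = alt0 j (i + c)) := by
  by_cases h1 : ∃ v, 1 ≤ v ∧ ∀ i (h : i < δ.length), δ.get ⟨i, h⟩ = alt0 v (i + c)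
  · obtain ⟨v, hv, hPv⟩ := h1
    by_cases h2 : ∃ k, 1 ≤ k ∧ k ≠ v ∧ ∀ i (h : i < δ.length), δ.get ⟨i, h⟩ = alt0 k (i + c)
    · obtain ⟨k, hk, hkv, hPk⟩ := h2
      left
      intro j hj i hi
      have a := hPv i hi
      have b := hPk i hi
      rcases Nat.mod_two_eq_zero_or_one (i + c) with hp | hp
      · simp only [alt0] at a ⊢
        rw [if_pos hp] at a
        rw [if_pos hp]
        exact a
      · exfalso
        simp only [alt0] at a b
        rw [if_neg (by omega)] at a
        rw [if_neg (by omega)] at b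
        omega
    · refine Or.inr (Or.inr ⟨v, hv, fun j hj => ⟨fun hPj => ?_, fun he => he ▸ hPv⟩⟩)
      by_contra hne
      exact h2 ⟨j, hj, hne, hPj⟩
  · refine Or.inr (Or.inl fun j hj hPj => h1 ⟨j, hj, hPj⟩)

lemma triP_cat (δ : List ℕ) (q : ℕ) : TriP (fun j => cat δ (Pat q j) ∈ Xtriple) :=
  triP_congr (fun j hj => (cat_pat_mem' hj δ q).symm) (triP_pref δ (q + δ.length))
-- ============ the three basic sets and disjointness ============

def A0 : Set (ℕ → ℕ) := {fun _ => 0}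
def SetU : Set (ℕ → ℕ) := {y | ∃ j, 1 ≤ j ∧ y = alt0 j}
def SetV : Set (ℕ → ℕ) := {y | ∃ j, 1 ≤ j ∧ y = alt1 j}

lemma czero_ne_alt0 {j : ℕ} (hj : 1 ≤ j) : czero ≠ alt0 j := by
  intro h
  have h1 : (0 : ℕ) = alt0 j 1 := congrFun h 1
  rw [alt0_one] at h1
  omega

lemma czero_ne_alt1 {j : ℕ} (hj : 1 ≤ j) : czero ≠ alt1 j := by
  intro h
  have h1 : (0 : ℕ) = alt1 j 0 := congrFun h 0
  rw [alt1_zero] at h1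
  omega

lemma alt0_ne_alt1 {j k : ℕ} (hk : 1 ≤ k) : alt0 j ≠ alt1 k := by
  intro h
  have h1 := congrFun h 0
  rw [alt0_zero, alt1_zero] at h1
  omega

lemma alt0_inj {j k : ℕ} (h : alt0 j = alt0 k) : j = k := by
  have h1 := congrFun h 1
  rwa [alt0_one, alt0_one] at h1

lemma alt1_inj {j k : ℕ} (h : alt1 j = alt1 k) : j = k := by
  have h1 := congrFun h 0
  rwa [alt1_zero, alt1_zero] at h1

lemma class_cases {y : ℕ → ℕ} (hy : y ∈ Xtriple) :
    (y ∈ A0 ∧ y ∉ SetU ∧ y ∉ SetV) ∨ (y ∉ A0 ∧ y ∈ SetU ∧ y ∉ SetV) ∨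
      (y ∉ A0 ∧ y ∉ SetU ∧ y ∈ SetV) := by
  rcases mem_class hy with h | ⟨j, hj, h⟩ | ⟨j, hj, h⟩ <;> subst h
  · refine Or.inl ⟨rfl, ?_, ?_⟩
    · rintro ⟨k, hk, he⟩; exact czero_ne_alt0 hk he
    · rintro ⟨k, hk, he⟩; exact czero_ne_alt1 hk he
  · refine Or.inr (Or.inl ⟨?_, ⟨j, hj, rfl⟩, ?_⟩)
    · intro hA
      exact czero_ne_alt0 hj (Set.mem_singleton_iff.mp hA).symm
    · rintro ⟨k, hk, he⟩; exact alt0_ne_alt1 hk he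
  · refine Or.inr (Or.inr ⟨?_, ?_, ⟨j, hj, rfl⟩⟩)
    · intro hA
      exact czero_ne_alt1 hj (Set.mem_singleton_iff.mp hA).symm
    · rintro ⟨k, hk, he⟩; exact alt0_ne_alt1 hj he.symm

-- ============ the structural class ============

def Cclass : Set (Set (ℕ → ℕ)) :=
  {S | S ⊆ Xtriple ∧
    ({j | 1 ≤ j ∧ alt0 j ∈ S}.Finite ∨ {j | 1 ≤ j ∧ alt0 j ∉ S}.Finite) ∧
    ({j | 1 ≤ j ∧ alt1 j ∈ S}.Finite ∨ {j | 1 ≤ j ∧ alt1 j ∉ S}.Finite)}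

lemma X_mem_C : Xtriple ∈ Cclass := by
  refine ⟨le_refl _, Or.inr ?_, Or.inr ?_⟩
  · apply Set.finite_empty.subset
    rintro j ⟨hj, hn⟩
    exact hn (alt0_mem j)
  · apply Set.finite_empty.subset
    rintro j ⟨hj, hn⟩
    exact hn (alt1_mem j)

lemma triP_fin {P : ℕ → Prop} (h : TriP P) :
    {j | 1 ≤ j ∧ P j}.Finite ∨ {j | 1 ≤ j ∧ ¬P j}.Finite := by
  rcases h with h | h | ⟨v, hv, h⟩
  · right
    apply Set.finite_empty.subset
    rintro j ⟨hj, hn⟩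
    exact hn (h j hj)
  · left
    apply Set.finite_empty.subset
    rintro j ⟨hj, hP⟩
    exact h j hj hP
  · left
    apply (Set.finite_singleton v).subset
    rintro j ⟨hj, hP⟩
    exact (h j hj).mp hP

lemma Cab_mem_C (α β : List ℕ) : Cab Xtriple α β ∈ Cclass := by
  refine ⟨Cab_subset_X α β, ?_, ?_⟩
  · have ht : TriP (fun j => alt0 j ∈ Cab Xtriple α β) :=
      triP_congr (fun j hj => (alt0_mem_Cab hj α β).symm)
        (triP_and (triP_cat β β.length) (triP_cat α β.length))
    exact triP_fin ht
  · have ht : TriP (fun j => alt1 j ∈ Cab Xtriple α β) :=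
      triP_congr (fun j hj => (alt1_mem_Cab hj α β).symm)
        (triP_and (triP_cat β (β.length + 1)) (triP_cat α (β.length + 1)))
    exact triP_fin ht

lemma C_compl {S : Set (ℕ → ℕ)} (hS : S ∈ Cclass) : Xtriple \ S ∈ Cclass := by
  obtain ⟨h1, h2, h3⟩ := hS
  refine ⟨Set.diff_subset, ?_, ?_⟩
  · rcases h2 with h | h
    · right
      apply h.subset
      rintro j ⟨hj, hn⟩
      refine ⟨hj, ?_⟩
      by_contra hns
      exact hn ⟨alt0_mem j, hns⟩
    · left
      apply h.subset
      rintro j ⟨hj, hmem⟩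
      exact ⟨hj, hmem.2⟩
  · rcases h3 with h | h
    · right
      apply h.subset
      rintro j ⟨hj, hn⟩
      refine ⟨hj, ?_⟩
      by_contra hns
      exact hn ⟨alt1_mem j, hns⟩
    · left
      apply h.subset
      rintro j ⟨hj, hmem⟩
      exact ⟨hj, hmem.2⟩

lemma C_inter {S T : Set (ℕ → ℕ)} (hS : S ∈ Cclass) (hT : T ∈ Cclass) : S ∩ T ∈ Cclass := by
  obtain ⟨hS1, hS2, hS3⟩ := hS
  obtain ⟨hT1, hT2, hT3⟩ := hT
  refine ⟨fun y hy => hS1 hy.1, ?_, ?_⟩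
  · rcases hS2 with h | h
    · exact Or.inl (h.subset (by rintro j ⟨hj, hm, _⟩; exact ⟨hj, hm⟩))
    · rcases hT2 with h' | h'
      · exact Or.inl (h'.subset (by rintro j ⟨hj, _, hm⟩; exact ⟨hj, hm⟩))
      · right
        apply (h.union h').subset
        rintro j ⟨hj, hn⟩
        by_cases hin : alt0 j ∈ S
        · exact Or.inr ⟨hj, fun ht => hn ⟨hin, ht⟩⟩
        · exact Or.inl ⟨hj, hin⟩
  · rcases hS3 with h | h
    · exact Or.inl (h.subset (by rintro j ⟨hj, hm, _⟩; exact ⟨hj, hm⟩))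
    · rcases hT3 with h' | h'
      · exact Or.inl (h'.subset (by rintro j ⟨hj, _, hm⟩; exact ⟨hj, hm⟩))
      · right
        apply (h.union h').subset
        rintro j ⟨hj, hn⟩
        by_cases hin : alt1 j ∈ S
        · exact Or.inr ⟨hj, fun ht => hn ⟨hin, ht⟩⟩
        · exact Or.inl ⟨hj, hin⟩

lemma C_union {S T : Set (ℕ → ℕ)} (hS : S ∈ Cclass) (hT : T ∈ Cclass) : S ∪ T ∈ Cclass := by
  obtain ⟨hS1, hS2, hS3⟩ := hS
  obtain ⟨hT1, hT2, hT3⟩ := hT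
  refine ⟨Set.union_subset hS1 hT1, ?_, ?_⟩
  · rcases hS2 with h | h
    · rcases hT2 with h' | h'
      · left
        apply (h.union h').subset
        rintro j ⟨hj, hm | hm⟩
        · exact Or.inl ⟨hj, hm⟩
        · exact Or.inr ⟨hj, hm⟩
      · exact Or.inr (h'.subset (by rintro j ⟨hj, hn⟩; exact ⟨hj, fun hm => hn (Or.inr hm)⟩))
    · exact Or.inr (h.subset (by rintro j ⟨hj, hn⟩; exact ⟨hj, fun hm => hn (Or.inl hm)⟩))
  · rcases hS3 with h | h
    · rcases hT3 with h' | h'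
      · left
        apply (h.union h').subset
        rintro j ⟨hj, hm | hm⟩
        · exact Or.inl ⟨hj, hm⟩
        · exact Or.inr ⟨hj, hm⟩
      · exact Or.inr (h'.subset (by rintro j ⟨hj, hn⟩; exact ⟨hj, fun hm => hn (Or.inr hm)⟩))
    · exact Or.inr (h.subset (by rintro j ⟨hj, hn⟩; exact ⟨hj, fun hm => hn (Or.inl hm)⟩))

lemma BA_subset_C : BA Xtriple ⊆ Cclass := by
  intro S hS
  exact hS Cclass ⟨X_mem_C, fun α _ β _ => Cab_mem_C α β,
    fun S hS T hT => C_union hS hT, fun S hS T hT => C_inter hS hT, fun S hS => C_compl hS⟩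
-- ============ indicator and span machinery ============

noncomputable def G1 : Set (↥Xtriple → ℤ) :=
  ({ind Xtriple {fun _ => 0}, ind Xtriple {y | ∃ j, 1 ≤ j ∧ y = alt0 j},
      ind Xtriple {y | ∃ j, 1 ≤ j ∧ y = alt1 j}} ∪
    {f | ∃ j, 1 ≤ j ∧ f = ind Xtriple {alt0 j}} ∪
    {f | ∃ j, 1 ≤ j ∧ f = ind Xtriple {alt1 j}})

noncomputable def G2 : Set (↥Xtriple → ℤ) :=
  ({ind Xtriple {fun _ => 0}, ind Xtriple {y | ∃ j, 1 ≤ j ∧ y = alt0 j}} ∪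
    {f | ∃ j, 1 ≤ j ∧ f = ind Xtriple {alt0 j}} ∪
    {f | ∃ j, 1 ≤ j ∧ f = ind Xtriple {alt1 j}})

noncomputable def M1 : Submodule ℤ (↥Xtriple → ℤ) := Submodule.span ℤ G1
noncomputable def M2 : Submodule ℤ (↥Xtriple → ℤ) := Submodule.span ℤ G2

lemma genA_mem_G2 : ind Xtriple A0 ∈ G2 := Or.inl (Or.inl (Or.inl rfl))
lemma genU_mem_G2 : ind Xtriple SetU ∈ G2 := Or.inl (Or.inl (Or.inr rfl))
lemma genb_mem_G2 {j : ℕ} (hj : 1 ≤ j) : ind Xtriple {alt0 j} ∈ G2 :=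
  Or.inl (Or.inr ⟨j, hj, rfl⟩)
lemma genc_mem_G2 {j : ℕ} (hj : 1 ≤ j) : ind Xtriple {alt1 j} ∈ G2 :=
  Or.inr ⟨j, hj, rfl⟩
lemma genV_mem_G1 : ind Xtriple SetV ∈ G1 :=
  Or.inl (Or.inl (Or.inr (Or.inr rfl)))

lemma G2_subset_G1 : G2 ⊆ G1 := by
  rintro f ((hf | hf) | hf)
  · rcases hf with hf | hf
    · exact Or.inl (Or.inl (Or.inl hf))
    · exact Or.inl (Or.inl (Or.inr (Or.inl hf)))
  · exact Or.inl (Or.inr hf)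
  · exact Or.inr hf

lemma M2_le_M1 : M2 ≤ M1 := Submodule.span_mono G2_subset_G1

lemma ind_empty : ind Xtriple (∅ : Set (ℕ → ℕ)) = 0 := by
  funext x; simp [ind]

lemma ind_diff {S T : Set (ℕ → ℕ)} (h : T ⊆ S) :
    ind Xtriple (S \ T) = ind Xtriple S - ind Xtriple T := by
  funext x
  simp only [ind, Pi.sub_apply, Set.mem_diff]
  by_cases hT : x.1 ∈ T
  · rw [if_pos hT, if_pos (h hT), if_neg (by simp [hT])]
    norm_num
  · rw [if_neg hT]
    by_cases hS : x.1 ∈ S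
    · rw [if_pos hS, if_pos ⟨hS, hT⟩]
      norm_num
    · rw [if_neg hS, if_neg (by simp [hS])]
      norm_num

lemma ind_union {S T : Set (ℕ → ℕ)} (h : ∀ y, y ∈ S → y ∉ T) :
    ind Xtriple (S ∪ T) = ind Xtriple S + ind Xtriple T := by
  funext x
  simp only [ind, Pi.add_apply, Set.mem_union]
  by_cases hS : x.1 ∈ S
  · rw [if_pos (Or.inl hS), if_pos hS, if_neg (h _ hS)]
    norm_num
  · by_cases hT : x.1 ∈ T
    · rw [if_pos (Or.inr hT), if_neg hS, if_pos hT]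
      norm_num
    · rw [if_neg (by tauto), if_neg hS, if_neg hT]
      norm_num

lemma ind_split (S : Set (ℕ → ℕ)) :
    ind Xtriple S =
      ind Xtriple (S ∩ A0) + ind Xtriple (S ∩ SetU) + ind Xtriple (S ∩ SetV) := by
  funext x
  simp only [ind, Pi.add_apply, Set.mem_inter_iff]
  rcases class_cases x.2 with ⟨h1, h2, h3⟩ | ⟨h1, h2, h3⟩ | ⟨h1, h2, h3⟩ <;>
    by_cases hS : x.1 ∈ S <;>
    simp [hS, h1, h2, h3]

lemma finU_span (J : Finset ℕ) :
    (∀ j ∈ J, 1 ≤ j) → ind Xtriple {y | ∃ j ∈ J, y = alt0 j} ∈ M2 := by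
  classical
  induction J using Finset.induction_on with
  | empty =>
    intro _
    have he : {y : ℕ → ℕ | ∃ j ∈ (∅ : Finset ℕ), y = alt0 j} = ∅ := by simp
    rw [he, ind_empty]
    exact Submodule.zero_mem _
  | @insert a J ha ih =>
    intro hJ
    have ha1 : 1 ≤ a := hJ a (Finset.mem_insert_self a J)
    have hrest := ih fun j hj => hJ j (Finset.mem_insert_of_mem hj)
    have he : {y : ℕ → ℕ | ∃ j ∈ insert a J, y = alt0 j} =
        {alt0 a} ∪ {y | ∃ j ∈ J, y = alt0 j} := by
      ext y
      simp only [Finset.mem_insert, Set.mem_union, Set.mem_setOf_eq, Set.mem_singleton_iff]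
      constructor
      · rintro ⟨j, hj | hj, rfl⟩
        · exact Or.inl (by rw [hj])
        · exact Or.inr ⟨j, hj, rfl⟩
      · rintro (rfl | ⟨j, hj, rfl⟩)
        · exact ⟨a, Or.inl rfl, rfl⟩
        · exact ⟨j, Or.inr hj, rfl⟩
    rw [he, ind_union ?disj]
    case disj =>
      rintro y hy ⟨j, hj, he2⟩
      rw [Set.mem_singleton_iff.mp hy] at he2
      have := alt0_inj he2
      exact ha (this ▸ hj)
    exact Submodule.add_mem _ (Submodule.subset_span (genb_mem_G2 ha1)) hrest

lemma finV_span (J : Finset ℕ) :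
    (∀ j ∈ J, 1 ≤ j) → ind Xtriple {y | ∃ j ∈ J, y = alt1 j} ∈ M2 := by
  classical
  induction J using Finset.induction_on with
  | empty =>
    intro _
    have he : {y : ℕ → ℕ | ∃ j ∈ (∅ : Finset ℕ), y = alt1 j} = ∅ := by simp
    rw [he, ind_empty]
    exact Submodule.zero_mem _
  | @insert a J ha ih =>
    intro hJ
    have ha1 : 1 ≤ a := hJ a (Finset.mem_insert_self a J)
    have hrest := ih fun j hj => hJ j (Finset.mem_insert_of_mem hj)
    have he : {y : ℕ → ℕ | ∃ j ∈ insert a J, y = alt1 j} =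
        {alt1 a} ∪ {y | ∃ j ∈ J, y = alt1 j} := by
      ext y
      simp only [Finset.mem_insert, Set.mem_union, Set.mem_setOf_eq, Set.mem_singleton_iff]
      constructor
      · rintro ⟨j, hj | hj, rfl⟩
        · exact Or.inl (by rw [hj])
        · exact Or.inr ⟨j, hj, rfl⟩
      · rintro (rfl | ⟨j, hj, rfl⟩)
        · exact ⟨a, Or.inl rfl, rfl⟩
        · exact ⟨j, Or.inr hj, rfl⟩
    rw [he, ind_union ?disj]
    case disj =>
      rintro y hy ⟨j, hj, he2⟩
      rw [Set.mem_singleton_iff.mp hy] at he2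
      have := alt1_inj he2
      exact ha (this ▸ hj)
    exact Submodule.add_mem _ (Submodule.subset_span (genc_mem_G2 ha1)) hrest

lemma indA_mem (S : Set (ℕ → ℕ)) : ind Xtriple (S ∩ A0) ∈ M2 := by
  by_cases h : czero ∈ S
  · have he : S ∩ A0 = A0 := by
      ext y
      constructor
      · exact fun hy => hy.2
      · intro hy
        have : y = czero := Set.mem_singleton_iff.mp hy
        exact ⟨this ▸ h, hy⟩
    rw [he]
    exact Submodule.subset_span genA_mem_G2
  · have he : S ∩ A0 = ∅ := by
      ext y
      simp only [Set.mem_inter_iff, Set.mem_empty_iff_false, iff_false, not_and]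
      intro hyS hyA
      have hya : y = czero := hyA
      subst hya
      exact h hyS
    rw [he, ind_empty]
    exact Submodule.zero_mem _

lemma indU_fin {S : Set (ℕ → ℕ)} (h : {j | 1 ≤ j ∧ alt0 j ∈ S}.Finite) :
    ind Xtriple (S ∩ SetU) ∈ M2 := by
  have he : S ∩ SetU = {y | ∃ j ∈ h.toFinset, y = alt0 j} := by
    ext y
    constructor
    · rintro ⟨hyS, j, hj, rfl⟩
      exact ⟨j, h.mem_toFinset.mpr ⟨hj, hyS⟩, rfl⟩
    · rintro ⟨j, hjm, rfl⟩
      have := h.mem_toFinset.mp hjm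
      exact ⟨this.2, j, this.1, rfl⟩
  rw [he]
  exact finU_span _ fun j hj => (h.mem_toFinset.mp hj).1

lemma indU_cof {S : Set (ℕ → ℕ)} (h : {j | 1 ≤ j ∧ alt0 j ∉ S}.Finite) :
    ind Xtriple (S ∩ SetU) ∈ M2 := by
  have he : S ∩ SetU = SetU \ {y | ∃ j ∈ h.toFinset, y = alt0 j} := by
    ext y
    constructor
    · rintro ⟨hyS, hyU⟩
      refine ⟨hyU, ?_⟩
      rintro ⟨j, hjm, rfl⟩
      exact (h.mem_toFinset.mp hjm).2 hyS
    · rintro ⟨⟨j, hj, rfl⟩, hnd⟩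
      refine ⟨?_, ⟨j, hj, rfl⟩⟩
      by_contra hns
      exact hnd ⟨j, h.mem_toFinset.mpr ⟨hj, hns⟩, rfl⟩
  have hsub : {y : ℕ → ℕ | ∃ j ∈ h.toFinset, y = alt0 j} ⊆ SetU := by
    rintro y ⟨j, hjm, rfl⟩
    exact ⟨j, (h.mem_toFinset.mp hjm).1, rfl⟩
  rw [he, ind_diff hsub]
  exact Submodule.sub_mem _ (Submodule.subset_span genU_mem_G2)
    (finU_span _ fun j hj => (h.mem_toFinset.mp hj).1)

lemma indV_fin {S : Set (ℕ → ℕ)} (h : {j | 1 ≤ j ∧ alt1 j ∈ S}.Finite) :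
    ind Xtriple (S ∩ SetV) ∈ M2 := by
  have he : S ∩ SetV = {y | ∃ j ∈ h.toFinset, y = alt1 j} := by
    ext y
    constructor
    · rintro ⟨hyS, j, hj, rfl⟩
      exact ⟨j, h.mem_toFinset.mpr ⟨hj, hyS⟩, rfl⟩
    · rintro ⟨j, hjm, rfl⟩
      have := h.mem_toFinset.mp hjm
      exact ⟨this.2, j, this.1, rfl⟩
  rw [he]
  exact finV_span _ fun j hj => (h.mem_toFinset.mp hj).1

lemma indV_cof {S : Set (ℕ → ℕ)} (h : {j | 1 ≤ j ∧ alt1 j ∉ S}.Finite) :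
    ind Xtriple (S ∩ SetV) - ind Xtriple SetV ∈ M2 := by
  have he : S ∩ SetV = SetV \ {y | ∃ j ∈ h.toFinset, y = alt1 j} := by
    ext y
    constructor
    · rintro ⟨hyS, hyV⟩
      refine ⟨hyV, ?_⟩
      rintro ⟨j, hjm, rfl⟩
      exact (h.mem_toFinset.mp hjm).2 hyS
    · rintro ⟨⟨j, hj, rfl⟩, hnd⟩
      refine ⟨?_, ⟨j, hj, rfl⟩⟩
      by_contra hns
      exact hnd ⟨j, h.mem_toFinset.mpr ⟨hj, hns⟩, rfl⟩
  have hsub : {y : ℕ → ℕ | ∃ j ∈ h.toFinset, y = alt1 j} ⊆ SetV := by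
    rintro y ⟨j, hjm, rfl⟩
    exact ⟨j, (h.mem_toFinset.mp hjm).1, rfl⟩
  rw [he, ind_diff hsub]
  have harith : ind Xtriple SetV - ind Xtriple {y | ∃ j ∈ h.toFinset, y = alt1 j} -
      ind Xtriple SetV = -(ind Xtriple {y | ∃ j ∈ h.toFinset, y = alt1 j}) := by
    ring
  rw [harith]
  exact Submodule.neg_mem _ (finV_span _ fun j hj => (h.mem_toFinset.mp hj).1)

lemma C_ind_fin {S : Set (ℕ → ℕ)} (hC : S ∈ Cclass)
    (hV : {j | 1 ≤ j ∧ alt1 j ∈ S}.Finite) : ind Xtriple S ∈ M2 := by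
  obtain ⟨h1, h2, _⟩ := hC
  rw [ind_split S]
  refine Submodule.add_mem _ (Submodule.add_mem _ (indA_mem S) ?_) (indV_fin hV)
  rcases h2 with h | h
  · exact indU_fin h
  · exact indU_cof h

lemma C_ind1 {S : Set (ℕ → ℕ)} (hC : S ∈ Cclass) : ind Xtriple S ∈ M1 := by
  obtain ⟨h1, h2, h3⟩ := hC
  rcases h3 with hV | hV
  · exact M2_le_M1 (C_ind_fin ⟨h1, h2, Or.inl hV⟩ hV)
  · rw [ind_split S]
    refine Submodule.add_mem _ (Submodule.add_mem _ (M2_le_M1 (indA_mem S)) ?_) ?_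
    · rcases h2 with h | h
      · exact M2_le_M1 (indU_fin h)
      · exact M2_le_M1 (indU_cof h)
    · have hiv := indV_cof hV
      have h4 : ind Xtriple (S ∩ SetV) =
          (ind Xtriple (S ∩ SetV) - ind Xtriple SetV) + ind Xtriple SetV := by ring
      rw [h4]
      exact Submodule.add_mem _ (M2_le_M1 hiv) (Submodule.subset_span genV_mem_G1)
-- ============ concrete computations of Cab sets ============

lemma cat00_czero : cat [0, 0] czero = czero := by
  funext n
  rcases n with _ | _ | m
  · rw [cat_cons_zero]
  · rw [cat_cons_succ, cat_cons_zero]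
  · rw [cat_cons_succ, cat_cons_succ, cat_nil]

lemma cat0_czero : cat [0] czero = czero := by
  funext n
  rcases n with _ | m
  · rw [cat_cons_zero]
  · rw [cat_cons_succ, cat_nil]

lemma Cab_A0 : Cab Xtriple [0, 0] [] = A0 := by
  ext y
  constructor
  · intro hy
    have hyX := Cab_subset_X _ _ hy
    rcases mem_class hyX with h | ⟨j, hj, h⟩ | ⟨j, hj, h⟩
    · rw [h]; rfl
    · exfalso
      rw [h] at hy
      have h2 := ((alt0_mem_Cab hj [0, 0] []).mp hy).2
      have h3 := (cat_pat_mem' hj [0, 0] _).mp h2 1 (by simp)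
      simp [alt0] at h3
      omega
    · exfalso
      rw [h] at hy
      have h2 := ((alt1_mem_Cab hj [0, 0] []).mp hy).2
      have h3 := (cat_pat_mem' hj [0, 0] _).mp h2 0 (by simp)
      simp [alt0] at h3
      omega
  · intro hy
    have hy' : y = czero := hy
    subst hy'
    apply (czero_mem_Cab [0, 0] []).mpr
    constructor
    · rw [cat_nil]; exact czero_mem
    · rw [cat00_czero]; exact czero_mem

lemma Cab_AU : Cab Xtriple [] [0] = A0 ∪ SetU := by
  ext y
  constructor
  · intro hy
    have hyX := Cab_subset_X _ _ hy
    rcases mem_class hyX with h | ⟨j, hj, h⟩ | ⟨j, hj, h⟩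
    · rw [h]; exact Or.inl rfl
    · exact Or.inr ⟨j, hj, h⟩
    · exfalso
      rw [h] at hy
      have h2 := ((alt1_mem_Cab hj [] [0]).mp hy).1
      have h3 := (cat_pat_mem' hj [0] _).mp h2 0 (by simp)
      simp [alt0] at h3
      omega
  · rintro (hy | ⟨j, hj, rfl⟩)
    · have hy' : y = czero := hy
      subst hy'
      apply (czero_mem_Cab [] [0]).mpr
      constructor
      · rw [cat0_czero]; exact czero_mem
      · rw [cat_nil]; exact czero_mem
    · apply (alt0_mem_Cab hj [] [0]).mpr
      constructor
      · apply (cat_pat_mem' hj [0] _).mpr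
        intro i hi
        have hi0 : i = 0 := by simp at hi; omega
        subst hi0
        simp [alt0]
      · rw [cat_nil]; exact pat_mem _ _

lemma Cab_AV : Cab Xtriple [0] [] = A0 ∪ SetV := by
  ext y
  constructor
  · intro hy
    have hyX := Cab_subset_X _ _ hy
    rcases mem_class hyX with h | ⟨j, hj, h⟩ | ⟨j, hj, h⟩
    · rw [h]; exact Or.inl rfl
    · exfalso
      rw [h] at hy
      have h2 := ((alt0_mem_Cab hj [0] []).mp hy).2
      have h3 := (cat_pat_mem' hj [0] _).mp h2 0 (by simp)
      simp [alt0] at h3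
      omega
    · exact Or.inr ⟨j, hj, h⟩
  · rintro (hy | ⟨j, hj, rfl⟩)
    · have hy' : y = czero := hy
      subst hy'
      apply (czero_mem_Cab [0] []).mpr
      constructor
      · rw [cat_nil]; exact czero_mem
      · rw [cat0_czero]; exact czero_mem
    · apply (alt1_mem_Cab hj [0] []).mpr
      constructor
      · rw [cat_nil]; exact pat_mem _ _
      · apply (cat_pat_mem' hj [0] _).mpr
        intro i hi
        have hi0 : i = 0 := by simp at hi; omega
        subst hi0
        simp [alt0]

lemma Cab_b {j : ℕ} (hj : 1 ≤ j) : Cab Xtriple [j, 0] [0] = {alt0 j} := by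
  ext y
  constructor
  · intro hy
    have hyX := Cab_subset_X _ _ hy
    rcases mem_class hyX with h | ⟨k, hk, h⟩ | ⟨k, hk, h⟩
    · exfalso
      rw [h] at hy
      have h2 := ((czero_mem_Cab [j, 0] [0]).mp hy).2
      have h3 := congrFun ((cat_zero_mem _).mp h2) 0
      rw [cat_cons_zero] at h3
      have h4 : j = 0 := h3
      omega
    · rw [h] at hy
      have h2 := ((alt0_mem_Cab hk [j, 0] [0]).mp hy).2
      have h3 := (cat_pat_mem' hk [j, 0] _).mp h2 0 (by simp)
      simp [alt0] at h3
      have h4 : alt0 k = alt0 j := by rw [h3]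
      rw [h, h4]; rfl
    · exfalso
      rw [h] at hy
      have h2 := ((alt1_mem_Cab hk [j, 0] [0]).mp hy).1
      have h3 := (cat_pat_mem' hk [0] _).mp h2 0 (by simp)
      simp [alt0] at h3
      omega
  · intro hy
    have hy' : y = alt0 j := hy
    subst hy'
    apply (alt0_mem_Cab hj [j, 0] [0]).mpr
    constructor
    · apply (cat_pat_mem' hj [0] _).mpr
      intro i hi
      have hi0 : i = 0 := by simp at hi; omega
      subst hi0
      simp [alt0]
    · apply (cat_pat_mem' hj [j, 0] _).mpr
      intro i hi
      have hi2 : i < 2 := by simpa using hi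
      interval_cases i <;> simp [alt0]

lemma Cab_c {j : ℕ} (hj : 1 ≤ j) : Cab Xtriple [] [j] = {alt1 j} := by
  ext y
  constructor
  · intro hy
    have hyX := Cab_subset_X _ _ hy
    rcases mem_class hyX with h | ⟨k, hk, h⟩ | ⟨k, hk, h⟩
    · exfalso
      rw [h] at hy
      have h2 := ((czero_mem_Cab [] [j]).mp hy).1
      have h3 := congrFun ((cat_zero_mem _).mp h2) 0
      rw [cat_cons_zero] at h3
      have h4 : j = 0 := h3
      omega
    · exfalso
      rw [h] at hy
      have h2 := ((alt0_mem_Cab hk [] [j]).mp hy).1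
      have h3 := (cat_pat_mem' hk [j] _).mp h2 0 (by simp)
      simp [alt0] at h3
      omega
    · rw [h] at hy
      have h2 := ((alt1_mem_Cab hk [] [j]).mp hy).1
      have h3 := (cat_pat_mem' hk [j] _).mp h2 0 (by simp)
      simp [alt0] at h3
      have h4 : alt1 k = alt1 j := by rw [h3]
      rw [h, h4]; rfl
  · intro hy
    have hy' : y = alt1 j := hy
    subst hy'
    apply (alt1_mem_Cab hj [] [j]).mpr
    constructor
    · apply (cat_pat_mem' hj [j] _).mpr
      intro i hi
      have hi0 : i = 0 := by simp at hi; omega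
      subst hi0
      simp [alt0]
    · rw [cat_nil]; exact pat_mem _ _

-- ============ language memberships ============

lemma lang_nil : ([] : List ℕ) ∈ language Xtriple :=
  ⟨czero, czero_mem, by simp [word]⟩

lemma lang_0 : ([0] : List ℕ) ∈ language Xtriple :=
  ⟨czero, czero_mem, by simp [word, List.ofFn_succ]⟩

lemma lang_00 : ([0, 0] : List ℕ) ∈ language Xtriple :=
  ⟨czero, czero_mem, by simp [word, List.ofFn_succ]⟩

lemma lang_j (j : ℕ) : ([j] : List ℕ) ∈ language Xtriple :=
  ⟨alt1 j, alt1_mem j, by simp [word, List.ofFn_succ, alt1]⟩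

lemma lang_j0 (j : ℕ) : ([j, 0] : List ℕ) ∈ language Xtriple :=
  ⟨alt1 j, alt1_mem j, by simp [word, List.ofFn_succ, alt1]⟩

-- ============ BA memberships ============

lemma mem_BA_of {S : Set (ℕ → ℕ)}
    (h : ∀ Col : Set (Set (ℕ → ℕ)), Xtriple ∈ Col →
      (∀ α ∈ language Xtriple, ∀ β ∈ language Xtriple, Cab Xtriple α β ∈ Col) →
      (∀ A ∈ Col, ∀ B ∈ Col, A ∪ B ∈ Col) →
      (∀ A ∈ Col, ∀ B ∈ Col, A ∩ B ∈ Col) →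
      (∀ A ∈ Col, Xtriple \ A ∈ Col) → S ∈ Col) :
    S ∈ BA Xtriple := by
  intro Col hCol
  exact h Col hCol.1 hCol.2.1 hCol.2.2.1 hCol.2.2.2.1 hCol.2.2.2.2

lemma A0_BA : A0 ∈ BA Xtriple := by
  apply mem_BA_of
  intro Col h1 h2 h3 h4 h5
  have h := h2 [0, 0] lang_00 [] lang_nil
  rwa [Cab_A0] at h

lemma AU_extract : (A0 ∪ SetU) ∩ (Xtriple \ A0) = SetU := by
  ext y
  constructor
  · rintro ⟨hA | hU, _, hnA⟩
    · exact absurd hA hnA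
    · exact hU
  · rintro ⟨j, hj, rfl⟩
    exact ⟨Or.inr ⟨j, hj, rfl⟩, alt0_mem j,
      fun hA => czero_ne_alt0 hj (Set.mem_singleton_iff.mp hA).symm⟩

lemma AV_extract : (A0 ∪ SetV) ∩ (Xtriple \ A0) = SetV := by
  ext y
  constructor
  · rintro ⟨hA | hV, _, hnA⟩
    · exact absurd hA hnA
    · exact hV
  · rintro ⟨j, hj, rfl⟩
    exact ⟨Or.inr ⟨j, hj, rfl⟩, alt1_mem j,
      fun hA => czero_ne_alt1 hj (Set.mem_singleton_iff.mp hA).symm⟩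

lemma U_BA : SetU ∈ BA Xtriple := by
  apply mem_BA_of
  intro Col h1 h2 h3 h4 h5
  have hAU := h2 [] lang_nil [0] lang_0
  rw [Cab_AU] at hAU
  have hA0 := h2 [0, 0] lang_00 [] lang_nil
  rw [Cab_A0] at hA0
  have hint := h4 _ hAU _ (h5 _ hA0)
  rwa [AU_extract] at hint

lemma V_BA : SetV ∈ BA Xtriple := by
  apply mem_BA_of
  intro Col h1 h2 h3 h4 h5
  have hAV := h2 [0] lang_0 [] lang_nil
  rw [Cab_AV] at hAV
  have hA0 := h2 [0, 0] lang_00 [] lang_nil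
  rw [Cab_A0] at hA0
  have hint := h4 _ hAV _ (h5 _ hA0)
  rwa [AV_extract] at hint

lemma b_BA {j : ℕ} (hj : 1 ≤ j) : ({alt0 j} : Set (ℕ → ℕ)) ∈ BA Xtriple := by
  apply mem_BA_of
  intro Col h1 h2 h3 h4 h5
  have h := h2 [j, 0] (lang_j0 j) [0] lang_0
  rwa [Cab_b hj] at h

lemma c_BA {j : ℕ} (hj : 1 ≤ j) : ({alt1 j} : Set (ℕ → ℕ)) ∈ BA Xtriple := by
  apply mem_BA_of
  intro Col h1 h2 h3 h4 h5
  have h := h2 [] lang_nil [j] (lang_j j)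
  rwa [Cab_c hj] at h

-- ============ Ureg memberships ============

lemma Ureg_A0 : A0 ∈ Ureg Xtriple := by
  refine ⟨A0_BA, (Set.finite_singleton 0).subset ?_, ⟨0, ?_⟩⟩
  · rintro a ⟨x, ⟨hxX, hx0⟩, hxA⟩
    have hx : x = czero := hxA
    subst hx
    simp only [Set.mem_singleton_iff]
    exact hx0.symm
  · exact ⟨czero, ⟨czero_mem, rfl⟩, rfl⟩

lemma Ureg_U : SetU ∈ Ureg Xtriple := by
  refine ⟨U_BA, (Set.finite_singleton 0).subset ?_, ⟨0, ?_⟩⟩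
  · rintro a ⟨x, ⟨hxX, hx0⟩, j, hj, rfl⟩
    simp only [Set.mem_singleton_iff]
    rw [← hx0, alt0_zero]
  · exact ⟨alt0 1, ⟨alt0_mem 1, alt0_zero 1⟩, ⟨1, le_refl 1, rfl⟩⟩

lemma Ureg_b {j : ℕ} (hj : 1 ≤ j) : ({alt0 j} : Set (ℕ → ℕ)) ∈ Ureg Xtriple := by
  refine ⟨b_BA hj, (Set.finite_singleton 0).subset ?_, ⟨0, ?_⟩⟩
  · rintro a ⟨x, ⟨hxX, hx0⟩, hxS⟩
    have hx : x = alt0 j := hxS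
    subst hx
    simp only [Set.mem_singleton_iff]
    rw [← hx0, alt0_zero]
  · exact ⟨alt0 j, ⟨alt0_mem j, alt0_zero j⟩, rfl⟩

lemma Ureg_c {j : ℕ} (hj : 1 ≤ j) : ({alt1 j} : Set (ℕ → ℕ)) ∈ Ureg Xtriple := by
  refine ⟨c_BA hj, (Set.finite_singleton j).subset ?_, ⟨j, ?_⟩⟩
  · rintro a ⟨x, ⟨hxX, hx0⟩, hxS⟩
    have hx : x = alt1 j := hxS
    subst hx
    simp only [Set.mem_singleton_iff]
    rw [← hx0, alt1_zero]
  · exact ⟨alt1 j, ⟨alt1_mem j, alt1_zero j⟩, rfl⟩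


/-- for the 2-step subshift `X` above,
`span_ℤ{χ_S : S ∈ U} = span_ℤ({χ_{A₀}} ∪ {χ_{B_j}, χ_{C_j} : j ≥ 1} ∪ {χ_{U'}, χ_{V'}})` and
`span_ℤ{χ_S : S ∈ U_reg} = span_ℤ({χ_{A₀}} ∪ {χ_{B_j}, χ_{C_j} : j ≥ 1} ∪ {χ_{U'}})`. -/
theorem stmt17 :
    Submodule.span ℤ {f : ↥Xtriple → ℤ | ∃ S ∈ BA Xtriple, f = ind Xtriple S} =
      Submodule.span ℤ
        ({ind Xtriple {fun _ => 0}, ind Xtriple {y | ∃ j, 1 ≤ j ∧ y = alt0 j},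
            ind Xtriple {y | ∃ j, 1 ≤ j ∧ y = alt1 j}} ∪
          {f | ∃ j, 1 ≤ j ∧ f = ind Xtriple {alt0 j}} ∪
          {f | ∃ j, 1 ≤ j ∧ f = ind Xtriple {alt1 j}}) ∧
    Submodule.span ℤ {f : ↥Xtriple → ℤ | ∃ S ∈ Ureg Xtriple, f = ind Xtriple S} =
      Submodule.span ℤ
        ({ind Xtriple {fun _ => 0}, ind Xtriple {y | ∃ j, 1 ≤ j ∧ y = alt0 j}} ∪
          {f | ∃ j, 1 ≤ j ∧ f = ind Xtriple {alt0 j}} ∪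
          {f | ∃ j, 1 ≤ j ∧ f = ind Xtriple {alt1 j}}) := by
  constructor
  · apply le_antisymm
    · apply Submodule.span_le.mpr
      rintro f ⟨S, hS, rfl⟩
      exact C_ind1 (BA_subset_C hS)
    · apply Submodule.span_le.mpr
      intro f hf
      rcases hf with ((rfl | rfl | rfl) | ⟨j, hj, rfl⟩) | ⟨j, hj, rfl⟩
      · exact Submodule.subset_span ⟨A0, A0_BA, rfl⟩
      · exact Submodule.subset_span ⟨SetU, U_BA, rfl⟩
      · exact Submodule.subset_span ⟨SetV, V_BA, rfl⟩
      · exact Submodule.subset_span ⟨{alt0 j}, b_BA hj, rfl⟩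
      · exact Submodule.subset_span ⟨{alt1 j}, c_BA hj, rfl⟩
  · apply le_antisymm
    · apply Submodule.span_le.mpr
      rintro f ⟨S, hS, rfl⟩
      obtain ⟨hBA, hfin, -⟩ := hS
      have hsub : {j | 1 ≤ j ∧ alt1 j ∈ S} ⊆ letterSet Xtriple S := by
        rintro j ⟨hj, hjS⟩
        exact ⟨alt1 j, ⟨⟨alt1_mem j, alt1_zero j⟩, hjS⟩⟩
      exact C_ind_fin (BA_subset_C hBA) (hfin.subset hsub)
    · apply Submodule.span_le.mpr
      intro f hf
      rcases hf with ((rfl | rfl) | ⟨j, hj, rfl⟩) | ⟨j, hj, rfl⟩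
      · exact Submodule.subset_span ⟨A0, Ureg_A0, rfl⟩
      · exact Submodule.subset_span ⟨SetU, Ureg_U, rfl⟩
      · exact Submodule.subset_span ⟨{alt0 j}, Ureg_b hj, rfl⟩
      · exact Submodule.subset_span ⟨{alt1 j}, Ureg_c hj, rfl⟩

end SubshiftPaper
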